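/- arXiv:math/0311251 — 3 statements merged into one kernel-verified Lean document; each statement's English description precedes it below -/
import Mathlib

section
/- For all λ, μ ∈ ℤ^N the following are equivalent: (i) l(λ) = l(μ) and Z_s(λ) ≡ Z_s(μ) (mod p) for all integers s ≥ 1; (ii) l(λ) = l(μ) and A_r(λ) − B_r(λ) = A_r(μ) − B_r(μ) for all r ∈ ℤ/pℤ. -/
namespace Kujawa

open Finset

variable {n : ℕ}

/-- The sign `(−1)^{p̄ i}` attached to the parity sequence `pb`. -/
def sg (pb : Fin (n + 1) → ZMod 2) (i : Fin (n + 1)) : ℤ :=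
  if pb i = 0 then 1 else -1

/-- `ϑ_j = ∑_{i > j} (−1)^{p̄_i + p̄_j}`. -/
def theta (pb : Fin (n + 1) → ZMod 2) (j : Fin (n + 1)) : ℤ :=
  ∑ i ∈ Finset.Ioi j, sg pb i * sg pb j

/-- The standard basis vector `ε_i` of `X(T) = ℤ^N`. -/
def eps (i : Fin (n + 1)) : Fin (n + 1) → ℤ := fun j => if j = i then 1 else 0

/-- The `j`-th residue `r_j(λ) = (λ + ϑ, ε_j)`. -/
def res (pb : Fin (n + 1) → ZMod 2) (l : Fin (n + 1) → ℤ) (j : Fin (n + 1)) : ℤ :=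
  sg pb j * (l j + theta pb j)

/-- `ρ = ϑ + ∑_{i : p̄_i = 0} ε_i`, coordinatewise. -/
def rho (pb : Fin (n + 1) → ZMod 2) (k : Fin (n + 1)) : ℤ :=
  theta pb k + (if pb k = 0 then 1 else 0)

/-- `l(λ) = ∑ λ_i`. -/
def ell (l : Fin (n + 1) → ℤ) : ℤ := ∑ i, l i

/-- The central character value `Z_r(λ)`. -/
def Zint (pb : Fin (n + 1) → ZMod 2) (r : ℕ) (l : Fin (n + 1) → ℤ) : ℤ :=
  ∑ s ∈ Finset.Icc 1 r, (-1 : ℤ) ^ (s - 1) *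
    ∑ K ∈ Finset.powersetCard s (Finset.univ : Finset (Fin (n + 1))),
      ∑ a ∈ Fintype.piFinset (fun _ : Fin (n + 1) => Finset.range (r + 2)),
        if (∑ k ∈ K, a k) = r - s + 1 ∧ (∀ k, k ∉ K → a k = 0) then
          (∏ k ∈ K, sg pb k) * ∏ k ∈ K, res pb l k ^ a k
        else 0

/-- `A_r(λ) = #{i : r_i(λ+ε_i) ≡ r (mod p)}`. -/
def Acount (pb : Fin (n + 1) → ZMod 2) (p : ℕ) (r : ZMod p) (l : Fin (n + 1) → ℤ) : ℕ :=
  (Finset.univ.filter fun i : Fin (n + 1) => ((res pb (l + eps i) i : ℤ) : ZMod p) = r).card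

/-- `B_r(λ) = #{i : r_i(λ) ≡ r (mod p)}`. -/
def Bcount (pb : Fin (n + 1) → ZMod 2) (p : ℕ) (r : ZMod p) (l : Fin (n + 1) → ℤ) : ℕ :=
  (Finset.univ.filter fun i : Fin (n + 1) => ((res pb l i : ℤ) : ZMod p) = r).card

/-- For `p = 0`: `γ_a` is the basis element `single a 1` of the free module `ℤ →₀ ℤ`. -/
noncomputable def gamma0 (a : ℤ) : ℤ →₀ ℤ := Finsupp.single a 1

/-- `wt` for `p = 0`, with values in the free `ℤ`-module on basis `{γ_a : a ∈ ℤ}`. -/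
noncomputable def wt0 (pb : Fin (n + 1) → ZMod 2) (l : Fin (n + 1) → ℤ) : ℤ →₀ ℤ :=
  ∑ i : Fin (n + 1), sg pb i • gamma0 (sg pb i * (l i + rho pb i))

/-- `Λ_r ∈ P = ℤδ ⊕ ⊕_{r ∈ ℤ/pℤ} ℤΛ_r`. -/
def LamP (p : ℕ) (r : ZMod p) : ℤ × (ZMod p → ℤ) := (0, fun s => if s = r then 1 else 0)

/-- `δ ∈ P`. -/
def delP (p : ℕ) : ℤ × (ZMod p → ℤ) := (1, 0)

/-- `γ_a = Λ_{s mod p} − Λ_{(s−1) mod p} − d·δ`, where `a = p·d + s` with `1 ≤ s ≤ p`. -/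
def gammaP (p : ℕ) (a : ℤ) : ℤ × (ZMod p → ℤ) :=
  LamP p (((a - 1) % (p : ℤ) + 1 : ℤ) : ZMod p) - LamP p (((a - 1) % (p : ℤ) : ℤ) : ZMod p) -
    ((a - 1) / (p : ℤ)) • delP p

/-- `wt` for prime `p`. -/
def wtP (p : ℕ) (pb : Fin (n + 1) → ZMod 2) (l : Fin (n + 1) → ℤ) : ℤ × (ZMod p → ℤ) :=
  ∑ i : Fin (n + 1), sg pb i • gammaP p (sg pb i * (l i + rho pb i))

/-- Entry `i` of the `r`-signature of `λ`: `1` codes `+`, `-1` codes `−`, `0` codes `0`. -/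
def sig (pb : Fin (n + 1) → ZMod 2) (p : ℕ) (r : ZMod p) (l : Fin (n + 1) → ℤ)
    (i : Fin (n + 1)) : ℤ :=
  if ((res pb (l + eps i) i : ℤ) : ZMod p) = r then 1
  else if ((res pb l i : ℤ) : ZMod p) = r then -1
  else 0

/-- Number of `−`'s of the `r`-signature of `λ` in positions `[i..j]`. -/
noncomputable def nM (pb : Fin (n + 1) → ZMod 2) (p : ℕ) (r : ZMod p) (l : Fin (n + 1) → ℤ)
    (i j : Fin (n + 1)) : ℕ :=
  Set.ncard {k : Fin (n + 1) | k ∈ Finset.Icc i j ∧ sig pb p r l k = -1}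

/-- Number of `+`'s of the `r`-signature of `λ` in positions `[i..j]`. -/
noncomputable def nP (pb : Fin (n + 1) → ZMod 2) (p : ℕ) (r : ZMod p) (l : Fin (n + 1) → ℤ)
    (i j : Fin (n + 1)) : ℕ :=
  Set.ncard {k : Fin (n + 1) | k ∈ Finset.Icc i j ∧ sig pb p r l k = 1}

/-- `i` is the position of a `−` in the reduced `r`-signature of `λ` (i.e. `i` is
`r`-normal for `λ`): the `−` at `i` is never cancelled, which happens exactly when every
interval `[i..j]` contains strictly more `−`'s than `+`'s. -/
def RMinus (pb : Fin (n + 1) → ZMod 2) (p : ℕ) (r : ZMod p) (l : Fin (n + 1) → ℤ)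
    (i : Fin (n + 1)) : Prop :=
  sig pb p r l i = -1 ∧ ∀ j : Fin (n + 1), i ≤ j → nP pb p r l i j < nM pb p r l i j

/-- `i` is the position of a `+` in the reduced `r`-signature of `λ` (i.e. `i` is
`r`-conormal for `λ`). -/
def RPlus (pb : Fin (n + 1) → ZMod 2) (p : ℕ) (r : ZMod p) (l : Fin (n + 1) → ℤ)
    (i : Fin (n + 1)) : Prop :=
  sig pb p r l i = 1 ∧ ∀ j : Fin (n + 1), j ≤ i → nM pb p r l j i < nP pb p r l j i

/-- `i` is the position of the leftmost `−` in the reduced `r`-signature (`r`-good). -/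
def RGood (pb : Fin (n + 1) → ZMod 2) (p : ℕ) (r : ZMod p) (l : Fin (n + 1) → ℤ)
    (i : Fin (n + 1)) : Prop :=
  RMinus pb p r l i ∧ ∀ j : Fin (n + 1), j < i → ¬ RMinus pb p r l j

/-- `i` is the position of the rightmost `+` in the reduced `r`-signature (`r`-cogood). -/
def RCogood (pb : Fin (n + 1) → ZMod 2) (p : ℕ) (r : ZMod p) (l : Fin (n + 1) → ℤ)
    (i : Fin (n + 1)) : Prop :=
  RPlus pb p r l i ∧ ∀ j : Fin (n + 1), i < j → ¬ RPlus pb p r l j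

open Classical in
/-- The crystal operator `ẽ*_r`, with `none` playing the role of `0`. -/
noncomputable def eStar (pb : Fin (n + 1) → ZMod 2) (p : ℕ) (r : ZMod p)
    (l : Fin (n + 1) → ℤ) : Option (Fin (n + 1) → ℤ) :=
  if h : (Finset.univ.filter (RMinus pb p r l)).Nonempty then
    some (l - eps ((Finset.univ.filter (RMinus pb p r l)).min' h))
  else none

open Classical in
/-- The crystal operator `f̃*_r`, with `none` playing the role of `0`. -/
noncomputable def fStar (pb : Fin (n + 1) → ZMod 2) (p : ℕ) (r : ZMod p)
    (l : Fin (n + 1) → ℤ) : Option (Fin (n + 1) → ℤ) :=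
  if h : (Finset.univ.filter (RPlus pb p r l)).Nonempty then
    some (l + eps ((Finset.univ.filter (RPlus pb p r l)).max' h))
  else none

/-- `A ↓ B`: there is an injection `θ : A → B` with `θ a ≤ a` for all `a ∈ A`. -/
def Down (A B : Finset (Fin (n + 1))) : Prop :=
  ∃ θ : Fin (n + 1) → Fin (n + 1), Set.InjOn θ ↑A ∧ ∀ a ∈ A, θ a ∈ B ∧ θ a ≤ a

/-- `C_{i,j}(λ) = {h ∈ (i..j) : c_{i,h}(λ) ≡ 0 (mod p)}`. -/
def Cset (pb : Fin (n + 1) → ZMod 2) (p : ℕ) (l : Fin (n + 1) → ℤ) (i j : Fin (n + 1)) :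
    Finset (Fin (n + 1)) :=
  (Finset.Ioo i j).filter fun h => ((res pb l i - res pb l h : ℤ) : ZMod p) = 0

/-- `B_{i,j}(λ) = {h ∈ [i..j) : b_{i,h}(λ) ≡ 0 (mod p)}`. -/
def Bset (pb : Fin (n + 1) → ZMod 2) (p : ℕ) (l : Fin (n + 1) → ℤ) (i j : Fin (n + 1)) :
    Finset (Fin (n + 1)) :=
  (Finset.Ico i j).filter fun h =>
    ((res pb l i - res pb (l + eps (h + 1)) (h + 1) : ℤ) : ZMod p) = 0

/-- The opposite parity sequence `p̄′_k = p̄_{w₀ k} + 1̄`, where `w₀ k = N + 1 − k`. -/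
def pbRev (pb : Fin (n + 1) → ZMod 2) : Fin (n + 1) → ZMod 2 := fun k => pb k.rev + 1

/-- `s̃ : ℤ^N → ℤ^N`, `(s̃ λ)_{w₀ i} = −λ_i`. -/
def stilde (l : Fin (n + 1) → ℤ) : Fin (n + 1) → ℤ := fun k => -l k.rev

/-- `(i, j)` is an `r`-canceling pair for `λ` (for `i < j`). -/
def CPair (pb : Fin (n + 1) → ZMod 2) (p : ℕ) (r : ZMod p) (l : Fin (n + 1) → ℤ)
    (i j : Fin (n + 1)) : Prop :=
  sig pb p r l i = -1 ∧ sig pb p r l j = 1 ∧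
    ∀ k : Fin (n + 1), i < k → k < j → sig pb p r l k = 0

/-- `(i i+1)·λ`: interchange coordinates `i` and `i+1`. -/
def swapL (i : Fin (n + 1)) (l : Fin (n + 1) → ℤ) : Fin (n + 1) → ℤ :=
  fun k => if k = i then l (i + 1) else if k = i + 1 then l i else l k

/-- The parity sequence obtained from `pb` by interchanging entries `i` and `i+1`. -/
def pbSwap (pb : Fin (n + 1) → ZMod 2) (i : Fin (n + 1)) : Fin (n + 1) → ZMod 2 :=
  fun k => if k = i then pb (i + 1) else if k = i + 1 then pb i else pb k

/-- The odd reflection `s_i` on `X(T)`. -/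
def sI (pb : Fin (n + 1) → ZMod 2) (p : ℕ) (i : Fin (n + 1)) (l : Fin (n + 1) → ℤ) :
    Fin (n + 1) → ℤ :=
  if ((sg pb i * l i - sg pb (i + 1) * l (i + 1) : ℤ) : ZMod p) = 0 then swapL i l
  else swapL i l + eps i - eps (i + 1)

section GF
variable {K : Type} [Field K] {n : ℕ}

noncomputable def geom (b : K) : PowerSeries K := PowerSeries.mk fun m => b ^ m

lemma geom_mul (b : K) : (1 - PowerSeries.C b * PowerSeries.X) * geom b = 1 := by
  ext m
  cases m with
  | zero =>
      simp [geom, PowerSeries.coeff_zero_eq_constantCoeff]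
  | succ m =>
      rw [sub_mul, one_mul, map_sub, mul_assoc, PowerSeries.coeff_C_mul,
        PowerSeries.coeff_succ_X_mul]
      simp [geom, PowerSeries.coeff_mk, pow_succ, mul_comm]

lemma factor_eq (b w : K) :
    (1 - PowerSeries.C (b + w) * PowerSeries.X) =
      (1 - PowerSeries.C b * PowerSeries.X) *
        (1 - PowerSeries.C w * PowerSeries.X * geom b) := by
  have h : (1 - PowerSeries.C b * PowerSeries.X) *
      (1 - PowerSeries.C w * PowerSeries.X * geom b) =
      (1 - PowerSeries.C b * PowerSeries.X) -
        PowerSeries.C w * PowerSeries.X *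
          ((1 - PowerSeries.C b * PowerSeries.X) * geom b) := by ring
  rw [h, geom_mul, mul_one, map_add]
  ring

lemma coeff_geom_prod (b : Fin (n + 1) → K) (t : Finset (Fin (n + 1))) (m M : ℕ)
    (hm : m < M) :
    PowerSeries.coeff m (∏ i ∈ t, geom (b i)) =
      ∑ a ∈ Fintype.piFinset (fun _ : Fin (n + 1) => Finset.range M),
        if (∑ k ∈ t, a k) = m ∧ (∀ k, k ∉ t → a k = 0) then ∏ k ∈ t, b k ^ a k else 0 := by
  classical
  rw [PowerSeries.coeff_prod, ← Finset.sum_filter]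
  refine Finset.sum_nbij' (fun l => ⇑l) (fun a => Finsupp.equivFunOnFinite.symm a) ?_ ?_ ?_ ?_ ?_
  · intro l hl
    rw [Finset.mem_finsuppAntidiag] at hl
    simp only [Finset.mem_filter, Fintype.mem_piFinset, Finset.mem_range]
    have hout : ∀ k, k ∉ t → l k = 0 := by
      intro k hk
      by_contra h
      exact hk (hl.2 (Finsupp.mem_support_iff.mpr h))
    refine ⟨fun i => ?_, hl.1, hout⟩
    by_cases hi : i ∈ t
    · have h2 : l i ≤ ∑ k ∈ t, l k := Finset.single_le_sum (fun k _ => Nat.zero_le _) hi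
      have h3 : t.sum ⇑l = ∑ k ∈ t, l k := rfl
      omega
    · rw [hout i hi]; omega
  · intro a ha
    simp only [Finset.mem_filter, Fintype.mem_piFinset, Finset.mem_range] at ha
    rw [Finset.mem_finsuppAntidiag]
    constructor
    · simpa using ha.2.1
    · intro k hk
      simp only [Finsupp.mem_support_iff, Finsupp.coe_equivFunOnFinite_symm] at hk
      by_contra hkt
      exact hk (ha.2.2 k hkt)
  · intro l _; exact Finsupp.equivFunOnFinite_symm_coe l
  · intro a _; rfl
  · intro l _
    simp [geom, PowerSeries.coeff_mk]


noncomputable def Hser (w b : Fin (n + 1) → K) : PowerSeries K :=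
  ∏ i, (1 - PowerSeries.C (w i) * PowerSeries.X * geom (b i))

lemma Hser_expand (w b : Fin (n + 1) → K) :
    Hser w b = ∑ t ∈ Finset.powerset (Finset.univ : Finset (Fin (n + 1))),
      PowerSeries.C ((-1 : K) ^ t.card * ∏ k ∈ t, w k) *
        (PowerSeries.X ^ t.card * ∏ i ∈ t, geom (b i)) := by
  classical
  rw [Hser]
  have h1 : ∀ i : Fin (n + 1), (1 - PowerSeries.C (w i) * PowerSeries.X * geom (b i)) =
      (-(PowerSeries.C (w i) * PowerSeries.X * geom (b i))) + 1 := fun i => by ring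
  rw [Finset.prod_congr rfl fun i _ => h1 i, Finset.prod_add]
  refine Finset.sum_congr rfl fun t _ => ?_
  rw [Finset.prod_const_one, mul_one]
  have h2 : ∀ i : Fin (n + 1), -(PowerSeries.C (w i) * PowerSeries.X * geom (b i)) =
      ((PowerSeries.C (-1) * PowerSeries.C (w i)) * PowerSeries.X) * geom (b i) := by
    intro i; simp only [map_neg, map_one]; ring
  rw [Finset.prod_congr rfl fun i _ => h2 i, Finset.prod_mul_distrib,
    Finset.prod_mul_distrib, Finset.prod_mul_distrib, Finset.prod_const,
    ← map_pow, ← map_prod, ← map_mul, Finset.prod_const]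
  ring

lemma coeff_Hser (w b : Fin (n + 1) → K) (r : ℕ) :
    PowerSeries.coeff (r + 1) (Hser w b) =
      -(∑ s ∈ Finset.Icc 1 r, (-1 : K) ^ (s - 1) *
        ∑ t ∈ Finset.powersetCard s (Finset.univ : Finset (Fin (n + 1))),
          ∑ a ∈ Fintype.piFinset (fun _ : Fin (n + 1) => Finset.range (r + 2)),
            if (∑ k ∈ t, a k) = r - s + 1 ∧ (∀ k, k ∉ t → a k = 0) then
              (∏ k ∈ t, w k) * ∏ k ∈ t, b k ^ a k
            else 0) +
      (-1 : K) ^ (r + 1) *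
        ∑ t ∈ Finset.powersetCard (r + 1) (Finset.univ : Finset (Fin (n + 1))),
          ∏ k ∈ t, w k := by
  classical
  rw [Hser_expand, map_sum]
  simp only [PowerSeries.coeff_C_mul, PowerSeries.coeff_X_pow_mul']
  rw [Finset.sum_powerset]
  have hcard : (Finset.univ : Finset (Fin (n + 1))).card = n + 1 := by simp
  set M := n + r + 3 with hM
  have hext : ∑ j ∈ Finset.range ((Finset.univ : Finset (Fin (n + 1))).card + 1),
        (∑ t ∈ Finset.powersetCard j (Finset.univ : Finset (Fin (n + 1))),
          ((-1 : K) ^ t.card * ∏ k ∈ t, w k) *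
            (if t.card ≤ r + 1 then
              PowerSeries.coeff (r + 1 - t.card) (∏ i ∈ t, geom (b i)) else 0))
      = ∑ j ∈ Finset.range M,
        (∑ t ∈ Finset.powersetCard j (Finset.univ : Finset (Fin (n + 1))),
          ((-1 : K) ^ t.card * ∏ k ∈ t, w k) *
            (if t.card ≤ r + 1 then
              PowerSeries.coeff (r + 1 - t.card) (∏ i ∈ t, geom (b i)) else 0)) := by
    refine Finset.sum_subset (Finset.range_subset_range.mpr (by omega)) ?_
    intro j _ hj
    rw [Finset.mem_range, not_lt] at hj
    rw [Finset.powersetCard_eq_empty.mpr (by omega), Finset.sum_empty]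
  rw [hext]
  have key : ∀ j, (∑ t ∈ Finset.powersetCard j (Finset.univ : Finset (Fin (n + 1))),
        ((-1 : K) ^ t.card * ∏ k ∈ t, w k) *
          (if t.card ≤ r + 1 then
            PowerSeries.coeff (r + 1 - t.card) (∏ i ∈ t, geom (b i)) else 0))
      = (if j ∈ Finset.Icc 1 r then
          -((-1 : K) ^ (j - 1) *
            ∑ t ∈ Finset.powersetCard j (Finset.univ : Finset (Fin (n + 1))),
              ∑ a ∈ Fintype.piFinset (fun _ : Fin (n + 1) => Finset.range (r + 2)),
                if (∑ k ∈ t, a k) = r - j + 1 ∧ (∀ k, k ∉ t → a k = 0) then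
                  (∏ k ∈ t, w k) * ∏ k ∈ t, b k ^ a k
                else 0)
          else 0)
        + (if j = r + 1 then
            (-1 : K) ^ (r + 1) *
              ∑ t ∈ Finset.powersetCard (r + 1) (Finset.univ : Finset (Fin (n + 1))),
                ∏ k ∈ t, w k
          else 0) := by
    intro j
    by_cases hj0 : j = 0
    · subst hj0
      rw [Finset.powersetCard_zero, Finset.sum_singleton]
      simp [PowerSeries.coeff_one]
    by_cases hjr : j ≤ r
    · rw [if_pos (Finset.mem_Icc.mpr ⟨by omega, hjr⟩), if_neg (by omega), add_zero]
      obtain ⟨j', rfl⟩ : ∃ j', j = j' + 1 := ⟨j - 1, by omega⟩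
      simp only [Nat.add_sub_cancel]
      rw [Finset.mul_sum, ← Finset.sum_neg_distrib]
      refine Finset.sum_congr rfl fun t ht => ?_
      have htc : t.card = j' + 1 := (Finset.mem_powersetCard.mp ht).2
      have hre : r - (j' + 1) + 1 = r + 1 - (j' + 1) := by omega
      rw [htc, if_pos (by omega),
        coeff_geom_prod b t (r + 1 - (j' + 1)) (r + 2) (by omega), hre,
        Finset.mul_sum, Finset.mul_sum, ← Finset.sum_neg_distrib]
      refine Finset.sum_congr rfl fun a _ => ?_
      rw [mul_ite, mul_ite, mul_zero, mul_zero]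
      split
      · rw [pow_succ]; ring
      · simp
    by_cases hjr1 : j = r + 1
    · subst hjr1
      rw [if_neg (by rw [Finset.mem_Icc]; omega), if_pos rfl, zero_add, Finset.mul_sum]
      refine Finset.sum_congr rfl fun t ht => ?_
      have htc : t.card = r + 1 := (Finset.mem_powersetCard.mp ht).2
      rw [htc, if_pos le_rfl, Nat.sub_self]
      have h1 : PowerSeries.coeff 0 (∏ i ∈ t, geom (b i)) = 1 := by
        rw [PowerSeries.coeff_zero_eq_constantCoeff_apply, map_prod]
        simp [geom]
      rw [h1]
      ring
    · rw [if_neg (by rw [Finset.mem_Icc]; omega), if_neg hjr1, add_zero]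
      refine Finset.sum_eq_zero fun t ht => ?_
      have htc : t.card = j := (Finset.mem_powersetCard.mp ht).2
      rw [htc, if_neg (by omega), mul_zero]
  rw [Finset.sum_congr rfl fun j _ => key j, Finset.sum_add_distrib]
  congr 1
  · rw [Finset.sum_ite_mem, Finset.inter_eq_right.mpr
      (fun x hx => Finset.mem_range.mpr (by have := (Finset.mem_Icc.mp hx).2; omega)),
      ← Finset.sum_neg_distrib]
  · rw [Finset.sum_ite_eq' (Finset.range M) (r + 1)]
    rw [if_pos (Finset.mem_range.mpr (by omega))]

end GF
section Poly
variable {K : Type} [Field K]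

lemma reflect_one_sub (c : K) :
    Polynomial.reflect 1 (1 - Polynomial.C c * Polynomial.X) =
      Polynomial.X - Polynomial.C c := by
  have h : (1 - Polynomial.C c * Polynomial.X : Polynomial K) =
      Polynomial.C 1 * Polynomial.X ^ 0 + Polynomial.C (-c) * Polynomial.X ^ 1 := by
    simp; ring
  rw [h, Polynomial.reflect_add, Polynomial.reflect_C_mul_X_pow,
    Polynomial.reflect_C_mul_X_pow]
  simp [Polynomial.revAt_le]
  ring

lemma natDegree_one_sub_le (c : K) :
    (1 - Polynomial.C c * Polynomial.X : Polynomial K).natDegree ≤ 1 := by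
  refine le_trans (Polynomial.natDegree_sub_le _ _) ?_
  simp [Polynomial.natDegree_C_mul_le]
  exact le_trans (Polynomial.natDegree_C_mul_le _ _) (by simp)

lemma reflect_prod_one_sub (M : Multiset K) :
    ((M.map fun c => 1 - Polynomial.C c * Polynomial.X).prod).natDegree ≤ Multiset.card M ∧
      Polynomial.reflect (Multiset.card M)
          ((M.map fun c => 1 - Polynomial.C c * Polynomial.X).prod) =
        (M.map fun c => Polynomial.X - Polynomial.C c).prod := by
  induction M using Multiset.induction with
  | empty => simp
  | cons c M ih =>
      rw [Multiset.map_cons, Multiset.prod_cons, Multiset.map_cons, Multiset.prod_cons,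
        Multiset.card_cons]
      constructor
      · refine le_trans (Polynomial.natDegree_mul_le) ?_
        have := natDegree_one_sub_le c
        omega
      · rw [show Multiset.card M + 1 = 1 + Multiset.card M by omega,
          Polynomial.reflect_mul _ _ (natDegree_one_sub_le c) ih.1,
          reflect_one_sub, ih.2]

lemma multiset_eq_of_prod_one_sub_eq (M N : Multiset K)
    (hc : Multiset.card M = Multiset.card N)
    (h : (M.map fun c => 1 - Polynomial.C c * Polynomial.X).prod =
      (N.map fun c => 1 - Polynomial.C c * Polynomial.X).prod) : M = N := by
  have h2 : (M.map fun c => Polynomial.X - Polynomial.C c).prod =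
      (N.map fun c => Polynomial.X - Polynomial.C c).prod := by
    rw [← (reflect_prod_one_sub M).2, ← (reflect_prod_one_sub N).2, hc, h]
  have := Polynomial.roots_multiset_prod_X_sub_C M
  rw [h2, Polynomial.roots_multiset_prod_X_sub_C] at this
  exact this.symm
end Poly

section Main

variable {K : Type} [Field K]

lemma res_add_eps (pb : Fin (n + 1) → ZMod 2) (l : Fin (n + 1) → ℤ) (i : Fin (n + 1)) :
    res pb (l + eps i) i = res pb l i + sg pb i := by
  simp [res, eps]
  ring

lemma constantCoeff_Hser (w b : Fin (n + 1) → K) :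
    PowerSeries.constantCoeff (Hser w b) = 1 := by
  rw [Hser, map_prod]
  refine Finset.prod_eq_one fun i _ => ?_
  simp [geom]

lemma Zint_cast (φ : ℤ →+* K) (pb : Fin (n + 1) → ZMod 2) (r : ℕ) (l : Fin (n + 1) → ℤ) :
    φ (Zint pb r l) = ∑ s ∈ Finset.Icc 1 r, (-1 : K) ^ (s - 1) *
        ∑ t ∈ Finset.powersetCard s (Finset.univ : Finset (Fin (n + 1))),
          ∑ a ∈ Fintype.piFinset (fun _ : Fin (n + 1) => Finset.range (r + 2)),
            if (∑ k ∈ t, a k) = r - s + 1 ∧ (∀ k, k ∉ t → a k = 0) then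
              (∏ k ∈ t, φ (sg pb k)) * ∏ k ∈ t, φ (res pb l k) ^ a k
            else 0 := by
  rw [Zint]
  simp only [map_sum, map_mul, map_pow, map_prod, apply_ite φ, map_zero, map_neg, map_one]

theorem main_aux (p : ℕ) [IsDomain (ZMod p)] (pb : Fin (n + 1) → ZMod 2)
    (lam mu : Fin (n + 1) → ℤ) :
    (∀ s : ℕ, 1 ≤ s → ((Zint pb s lam : ZMod p) = (Zint pb s mu : ZMod p))) ↔
      (∀ r : ZMod p,
        (Acount pb p r lam : ℤ) - (Bcount pb p r lam : ℤ) =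
          (Acount pb p r mu : ℤ) - (Bcount pb p r mu : ℤ)) := by
  classical
  set K := FractionRing (ZMod p) with hK
  let ψ : ZMod p →+* K := algebraMap (ZMod p) K
  have hψ : Function.Injective ψ := IsFractionRing.injective _ _
  let φ : ℤ →+* K := ψ.comp (Int.castRingHom (ZMod p))
  have hφψ : ∀ x : ℤ, φ x = ψ ((x : ZMod p)) := fun x => rfl
  set w : Fin (n + 1) → K := fun i => φ (sg pb i) with hw
  -- the four power series
  set Plam : PowerSeries K :=
    ∏ i : Fin (n + 1), (1 - PowerSeries.C (φ (res pb (lam + eps i) i)) * PowerSeries.X)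
    with hPlam
  set Pmu : PowerSeries K :=
    ∏ i : Fin (n + 1), (1 - PowerSeries.C (φ (res pb (mu + eps i) i)) * PowerSeries.X)
    with hPmu
  set Qlam : PowerSeries K :=
    ∏ i : Fin (n + 1), (1 - PowerSeries.C (φ (res pb lam i)) * PowerSeries.X) with hQlam
  set Qmu : PowerSeries K :=
    ∏ i : Fin (n + 1), (1 - PowerSeries.C (φ (res pb mu i)) * PowerSeries.X) with hQmu
  have key : ∀ l : Fin (n + 1) → ℤ,
      (∏ i : Fin (n + 1), (1 - PowerSeries.C (φ (res pb (l + eps i) i)) * PowerSeries.X))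
        = (∏ i : Fin (n + 1), (1 - PowerSeries.C (φ (res pb l i)) * PowerSeries.X)) *
          Hser w (fun i => φ (res pb l i)) := by
    intro l
    rw [Hser, ← Finset.prod_mul_distrib]
    refine Finset.prod_congr rfl fun i _ => ?_
    rw [← factor_eq]
    congr 2
    rw [res_add_eps, map_add]
  have keyl : Plam = Qlam * Hser w (fun i => φ (res pb lam i)) := by
    rw [hPlam, hQlam]; exact key lam
  have keym : Pmu = Qmu * Hser w (fun i => φ (res pb mu i)) := by
    rw [hPmu, hQmu]; exact key mu
  have hZ0 : ∀ l : Fin (n + 1) → ℤ, Zint pb 0 l = 0 := fun l => by simp [Zint]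
  -- step 1
  have h1 : (∀ s : ℕ, 1 ≤ s → ((Zint pb s lam : ZMod p) = (Zint pb s mu : ZMod p))) ↔
      Hser w (fun i => φ (res pb lam i)) = Hser w (fun i => φ (res pb mu i)) := by
    constructor
    · intro h
      ext m
      cases m with
      | zero =>
          rw [PowerSeries.coeff_zero_eq_constantCoeff_apply,
            PowerSeries.coeff_zero_eq_constantCoeff_apply, constantCoeff_Hser,
            constantCoeff_Hser]
      | succ r =>
          rw [coeff_Hser, coeff_Hser, ← Zint_cast φ pb r lam, ← Zint_cast φ pb r mu]
          have hz : φ (Zint pb r lam) = φ (Zint pb r mu) := by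
            rcases Nat.eq_zero_or_pos r with rfl | hr
            · rw [hZ0, hZ0]
            · rw [hφψ, hφψ]
              exact congrArg ψ (h r hr)
          rw [hz]
    · intro h s hs
      have h2 := congrArg (PowerSeries.coeff (s + 1)) h
      rw [coeff_Hser, coeff_Hser, ← Zint_cast φ pb s lam, ← Zint_cast φ pb s mu] at h2
      have h3 : φ (Zint pb s lam) = φ (Zint pb s mu) := by linear_combination -h2
      rw [hφψ, hφψ] at h3
      exact hψ h3
  -- step 2
  have hQl1 : PowerSeries.constantCoeff Qlam = 1 := by
    rw [hQlam, map_prod]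
    refine Finset.prod_eq_one fun i _ => ?_
    simp
  have hQm1 : PowerSeries.constantCoeff Qmu = 1 := by
    rw [hQmu, map_prod]
    refine Finset.prod_eq_one fun i _ => ?_
    simp
  have hQne : Qlam * Qmu ≠ 0 := by
    intro h0
    have : PowerSeries.constantCoeff (Qlam * Qmu) = 1 := by
      rw [map_mul, hQl1, hQm1, mul_one]
    rw [h0, map_zero] at this
    exact zero_ne_one this
  have h2 : (Hser w (fun i => φ (res pb lam i)) = Hser w (fun i => φ (res pb mu i))) ↔
      Plam * Qmu = Pmu * Qlam := by
    constructor
    · intro h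
      rw [keyl, keym, h]
      ring
    · intro h
      rw [keyl, keym] at h
      refine mul_left_cancel₀ hQne ?_
      linear_combination h
  -- step 3 : to polynomials
  set PolPlam : Polynomial K :=
    ∏ i : Fin (n + 1), (1 - Polynomial.C (φ (res pb (lam + eps i) i)) * Polynomial.X)
    with hPolPlam
  set PolPmu : Polynomial K :=
    ∏ i : Fin (n + 1), (1 - Polynomial.C (φ (res pb (mu + eps i) i)) * Polynomial.X)
    with hPolPmu
  set PolQlam : Polynomial K :=
    ∏ i : Fin (n + 1), (1 - Polynomial.C (φ (res pb lam i)) * Polynomial.X) with hPolQlam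
  set PolQmu : Polynomial K :=
    ∏ i : Fin (n + 1), (1 - Polynomial.C (φ (res pb mu i)) * Polynomial.X) with hPolQmu
  have hcoe : ∀ c : K, ((1 - Polynomial.C c * Polynomial.X : Polynomial K) : PowerSeries K)
      = 1 - PowerSeries.C c * PowerSeries.X := by
    intro c
    push_cast
    rfl
  have hcoeP : ∀ (q : Fin (n + 1) → K),
      ((∏ i : Fin (n + 1), (1 - Polynomial.C (q i) * Polynomial.X) : Polynomial K) :
        PowerSeries K)
        = ∏ i : Fin (n + 1), (1 - PowerSeries.C (q i) * PowerSeries.X) := by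
    intro q
    rw [← Polynomial.coeToPowerSeries.ringHom_apply, map_prod]
    exact Finset.prod_congr rfl fun i _ => by
      rw [Polynomial.coeToPowerSeries.ringHom_apply, hcoe]
  have h3 : (Plam * Qmu = Pmu * Qlam) ↔ PolPlam * PolQmu = PolPmu * PolQlam := by
    constructor
    · intro h
      apply Polynomial.coe_inj.mp
      rw [Polynomial.coe_mul, Polynomial.coe_mul, hPolPlam, hPolPmu, hPolQlam, hPolQmu,
        hcoeP, hcoeP, hcoeP, hcoeP, ← hPlam, ← hPmu, ← hQlam, ← hQmu]
      exact h
    · intro h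
      have h4 := congrArg (fun q : Polynomial K => (q : PowerSeries K)) h
      simp only [Polynomial.coe_mul] at h4
      rw [hPolPlam, hPolPmu, hPolQlam, hPolQmu, hcoeP, hcoeP, hcoeP, hcoeP,
        ← hPlam, ← hPmu, ← hQlam, ← hQmu] at h4
      exact h4
  -- step 4 : to multisets over K
  have hprodM : ∀ l m : Fin (n + 1) → ℤ,
      (∏ i : Fin (n + 1), (1 - Polynomial.C (φ (res pb (l + eps i) i)) * Polynomial.X)) *
        (∏ i : Fin (n + 1), (1 - Polynomial.C (φ (res pb m i)) * Polynomial.X))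
      = (((Multiset.map (fun i => φ (res pb (l + eps i) i)) Finset.univ.val) +
          (Multiset.map (fun i => φ (res pb m i)) Finset.univ.val)).map
            fun c => 1 - Polynomial.C c * Polynomial.X).prod := by
    intro l m
    rw [Multiset.map_add, Multiset.prod_add, Multiset.map_map, Multiset.map_map]
    rw [Finset.prod_eq_multiset_prod, Finset.prod_eq_multiset_prod]
    rfl
  have h4 : (PolPlam * PolQmu = PolPmu * PolQlam) ↔
      ((Multiset.map (fun i => φ (res pb (lam + eps i) i)) Finset.univ.val) +
        (Multiset.map (fun i => φ (res pb mu i)) Finset.univ.val))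
      = ((Multiset.map (fun i => φ (res pb (mu + eps i) i)) Finset.univ.val) +
        (Multiset.map (fun i => φ (res pb lam i)) Finset.univ.val)) := by
    rw [hPolPlam, hPolPmu, hPolQlam, hPolQmu]
    constructor
    · intro h
      refine multiset_eq_of_prod_one_sub_eq _ _ (by simp) ?_
      rw [← hprodM, ← hprodM]
      exact h
    · intro h
      rw [hprodM, hprodM, h]
  -- step 5 : to multisets over ZMod p
  have h5 : (((Multiset.map (fun i => φ (res pb (lam + eps i) i)) Finset.univ.val) +
        (Multiset.map (fun i => φ (res pb mu i)) Finset.univ.val))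
      = ((Multiset.map (fun i => φ (res pb (mu + eps i) i)) Finset.univ.val) +
        (Multiset.map (fun i => φ (res pb lam i)) Finset.univ.val))) ↔
      (((Multiset.map (fun i => ((res pb (lam + eps i) i : ℤ) : ZMod p)) Finset.univ.val) +
        (Multiset.map (fun i => ((res pb mu i : ℤ) : ZMod p)) Finset.univ.val))
      = ((Multiset.map (fun i => ((res pb (mu + eps i) i : ℤ) : ZMod p)) Finset.univ.val) +
        (Multiset.map (fun i => ((res pb lam i : ℤ) : ZMod p)) Finset.univ.val))) := by
    have hm : ∀ (g : Fin (n + 1) → ℤ),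
        Multiset.map (fun i => φ (g i)) Finset.univ.val
          = Multiset.map ψ (Multiset.map (fun i => ((g i : ℤ) : ZMod p)) Finset.univ.val) := by
      intro g
      rw [Multiset.map_map]
      rfl
    rw [hm, hm, hm, hm, ← Multiset.map_add, ← Multiset.map_add]
    exact ⟨fun h => Multiset.map_injective hψ h, fun h => by rw [h]⟩
  -- step 6 : to counts
  have hcnt : ∀ (f : Fin (n + 1) → ZMod p) (r : ZMod p),
      Multiset.count r (Multiset.map f Finset.univ.val)
        = (Finset.univ.filter fun i => f i = r).card := by
    intro f r
    rw [Multiset.count_map, Finset.card_def, Finset.filter_val]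
    exact congrArg Multiset.card (Multiset.filter_congr fun x _ => eq_comm)
  have h6 : (((Multiset.map (fun i => ((res pb (lam + eps i) i : ℤ) : ZMod p)) Finset.univ.val) +
        (Multiset.map (fun i => ((res pb mu i : ℤ) : ZMod p)) Finset.univ.val))
      = ((Multiset.map (fun i => ((res pb (mu + eps i) i : ℤ) : ZMod p)) Finset.univ.val) +
        (Multiset.map (fun i => ((res pb lam i : ℤ) : ZMod p)) Finset.univ.val))) ↔
      (∀ r : ZMod p,
        (Acount pb p r lam : ℤ) - (Bcount pb p r lam : ℤ) =
          (Acount pb p r mu : ℤ) - (Bcount pb p r mu : ℤ)) := by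
    rw [Multiset.ext]
    constructor
    · intro h r
      have hr := h r
      rw [Multiset.count_add, Multiset.count_add, hcnt, hcnt, hcnt, hcnt] at hr
      rw [Acount, Bcount, Acount, Bcount] at *
      omega
    · intro h r
      have hr := h r
      rw [Multiset.count_add, Multiset.count_add, hcnt, hcnt, hcnt, hcnt]
      rw [Acount, Bcount, Acount, Bcount] at hr
      omega
  exact h1.trans (h2.trans (h3.trans (h4.trans (h5.trans h6))))

end Main


/-- (i) `l(λ) = l(μ)` and `Z_s(λ) ≡ Z_s(μ) (mod p)` for all `s ≥ 1` iff
(ii) `l(λ) = l(μ)` and `A_r(λ) − B_r(λ) = A_r(μ) − B_r(μ)` for all `r ∈ ℤ/pℤ`. -/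
theorem statement1 (p : ℕ) (hp : p = 0 ∨ p.Prime) (pb : Fin (n + 1) → ZMod 2)
    (lam mu : Fin (n + 1) → ℤ) :
    (ell lam = ell mu ∧ ∀ s : ℕ, 1 ≤ s → ((Zint pb s lam : ZMod p) = (Zint pb s mu : ZMod p))) ↔
      (ell lam = ell mu ∧ ∀ r : ZMod p,
        (Acount pb p r lam : ℤ) - (Bcount pb p r lam : ℤ) =
          (Acount pb p r mu : ℤ) - (Bcount pb p r mu : ℤ)) := by
  have hdom : IsDomain (ZMod p) := by
    rcases hp with rfl | hp
    · exact inferInstanceAs (IsDomain ℤ)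
    · haveI := Fact.mk hp
      infer_instance
  exact and_congr_right fun _ => @main_aux n p hdom pb lam mu

end Kujawa
end

section
/- Let p = 0. For all λ, μ ∈ ℤ^N one has wt(λ) = wt(μ) in P if and only if l(λ) = l(μ) and A_r(λ) − B_r(λ) = A_r(μ) − B_r(μ) for all r ∈ ℤ. -/
namespace Kujawa

open Finset

variable {n : ℕ}

lemma zmod0_cast (x : ℤ) : ((x : ZMod 0)) = x := rfl

lemma pb_cases (x : ZMod 2) : x = 0 ∨ x = 1 := by revert x; decide

lemma wt0_apply (pb : Fin (n + 1) → ZMod 2) (l : Fin (n + 1) → ℤ) (r : ℤ) :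
    wt0 pb l r = ∑ i, sg pb i * (if sg pb i * (l i + rho pb i) = r then 1 else 0) := by
  unfold wt0 gamma0
  rw [Finset.sum_apply']
  refine Finset.sum_congr rfl fun i _ => ?_
  rw [Finsupp.smul_apply, Finsupp.single_apply, smul_eq_mul]

lemma AB_key (pb : Fin (n + 1) → ZMod 2) (l : Fin (n + 1) → ℤ) (r : ℤ) :
    (Acount pb 0 (r : ZMod 0) l : ℤ) - (Bcount pb 0 (r : ZMod 0) l : ℤ) =
      wt0 pb l r - wt0 pb l (r + 1) := by
  have hA : Acount pb 0 (r : ZMod 0) l =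
      (Finset.univ.filter fun i : Fin (n + 1) => res pb (l + eps i) i = r).card := rfl
  have hB : Bcount pb 0 (r : ZMod 0) l =
      (Finset.univ.filter fun i : Fin (n + 1) => res pb l i = r).card := rfl
  rw [hA, hB, Finset.card_filter, Finset.card_filter, wt0_apply, wt0_apply]
  push_cast
  rw [← Finset.sum_sub_distrib, ← Finset.sum_sub_distrib]
  refine Finset.sum_congr rfl fun i _ => ?_
  have heps : (l + eps i) i = l i + 1 := by simp [eps]
  simp only [res, rho, heps]
  rcases pb_cases (pb i) with hp | hp <;>
    simp only [sg, hp, if_pos rfl, one_ne_zero, if_false, one_mul, neg_one_mul, neg_mul] <;>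
  · split_ifs <;> omega

lemma zero_of_shift (d : ℤ →₀ ℤ) (hd : ∀ r : ℤ, d r = d (r + 1)) : d = 0 := by
  have key : ∀ (a : ℤ) (k : ℕ), d a = d (a + k) := by
    intro a k
    induction k with
    | zero => simp
    | succ k ih =>
      have : (a : ℤ) + (k + 1 : ℕ) = (a + k) + 1 := by push_cast; ring
      rw [this, ← hd, ih]
  ext a
  by_contra hne
  have hmem : a ∈ d.support := Finsupp.mem_support_iff.2 (by simpa using hne)
  have hne' : d.support.Nonempty := ⟨a, hmem⟩
  set M := d.support.max' hne' with hM
  have haM : a ≤ M := Finset.le_max' _ a hmem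
  have hM1 : d (M + 1) = 0 := by
    by_contra h0
    have : M + 1 ≤ M := Finset.le_max' _ _ (Finsupp.mem_support_iff.2 h0)
    omega
  have hk := key a (M + 1 - a).toNat
  rw [show a + ((M + 1 - a).toNat : ℤ) = M + 1 by omega] at hk
  rw [hk, hM1] at hne
  simp at hne

lemma ell_eq (pb : Fin (n + 1) → ZMod 2) (l : Fin (n + 1) → ℤ) :
    ell l = Finsupp.linearCombination ℤ (id : ℤ → ℤ) (wt0 pb l) - ∑ i, rho pb i := by
  unfold wt0 gamma0
  rw [map_sum]
  have : ∀ i : Fin (n + 1),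
      Finsupp.linearCombination ℤ (id : ℤ → ℤ)
        (sg pb i • Finsupp.single (sg pb i * (l i + rho pb i)) 1) = l i + rho pb i := by
    intro i
    rw [map_smul, Finsupp.linearCombination_single]
    rcases pb_cases (pb i) with hp | hp <;> simp [sg, hp]
  rw [Finset.sum_congr rfl fun i _ => this i]
  unfold ell
  rw [Finset.sum_add_distrib]
  ring

/-- for `p = 0`, `wt(λ) = wt(μ)` iff `l(λ) = l(μ)` and
`A_r(λ) − B_r(λ) = A_r(μ) − B_r(μ)` for all `r ∈ ℤ` (note `ZMod 0 = ℤ`). -/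
theorem statement2 (pb : Fin (n + 1) → ZMod 2) (lam mu : Fin (n + 1) → ℤ) :
    wt0 pb lam = wt0 pb mu ↔
      (ell lam = ell mu ∧ ∀ r : ZMod 0,
        (Acount pb 0 r lam : ℤ) - (Bcount pb 0 r lam : ℤ) =
          (Acount pb 0 r mu : ℤ) - (Bcount pb 0 r mu : ℤ)) := by
  constructor
  · intro h
    constructor
    · rw [ell_eq pb lam, ell_eq pb mu, h]
    · intro r
      have hr : ((r : ℤ) : ZMod 0) = r := rfl
      have h1 := AB_key pb lam r
      have h2 := AB_key pb mu r
      rw [h] at h1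
      exact h1.trans h2.symm
  · rintro ⟨-, hr⟩
    have hd : ∀ r : ℤ, (wt0 pb lam - wt0 pb mu) r = (wt0 pb lam - wt0 pb mu) (r + 1) := by
      intro r
      have h1 := AB_key pb lam r
      have h2 := AB_key pb mu r
      have h3 := hr (r : ZMod 0)
      rw [h1, h2] at h3
      simp only [Finsupp.sub_apply]
      linarith
    have := zero_of_shift _ hd
    have := sub_eq_zero.mp this
    exact this


end Kujawa
end

section
/- For every λ ∈ ℤ^N, every 1 ≤ i ≤ N, and every r ∈ ℤ/pℤ: i is r-good for λ if and only if i is r-normal for λ and i is r-conormal for λ − ε_i. -/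
namespace Kujawa

open Finset

variable {n : ℕ}

/-! ### Auxiliary machinery for statement 9 -/

/-- Number of `−`'s of `σ` on `[a..b]` (ℕ-indexed). -/
def mcnt (σ : ℕ → ℤ) (a b : ℕ) : ℕ := ((Finset.Icc a b).filter (fun k => σ k = -1)).card

/-- Number of `+`'s of `σ` on `[a..b]` (ℕ-indexed). -/
def pcnt (σ : ℕ → ℤ) (a b : ℕ) : ℕ := ((Finset.Icc a b).filter (fun k => σ k = 1)).card

/-- `#− − #+` on `[a..b]`. -/
def Dd (σ : ℕ → ℤ) (a b : ℕ) : ℤ := (mcnt σ a b : ℤ) - (pcnt σ a b : ℤ)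

lemma Icc_split_aux {a b c : ℕ} (h1 : a ≤ b + 1) (h2 : b ≤ c) :
    Finset.Icc a c = Finset.Icc a b ∪ Finset.Icc (b + 1) c := by
  ext k; simp only [Finset.mem_Icc, Finset.mem_union]; omega

lemma Icc_disj_aux {a b c : ℕ} : Disjoint (Finset.Icc a b) (Finset.Icc (b + 1) c) := by
  rw [Finset.disjoint_left]
  intro k h1 h2
  simp only [Finset.mem_Icc] at h1 h2
  omega

lemma mcnt_split (σ : ℕ → ℤ) {a b c : ℕ} (h1 : a ≤ b + 1) (h2 : b ≤ c) :
    mcnt σ a c = mcnt σ a b + mcnt σ (b + 1) c := by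
  unfold mcnt
  rw [Icc_split_aux h1 h2, Finset.filter_union, Finset.card_union_of_disjoint]
  exact Finset.disjoint_filter_filter Icc_disj_aux

lemma pcnt_split (σ : ℕ → ℤ) {a b c : ℕ} (h1 : a ≤ b + 1) (h2 : b ≤ c) :
    pcnt σ a c = pcnt σ a b + pcnt σ (b + 1) c := by
  unfold pcnt
  rw [Icc_split_aux h1 h2, Finset.filter_union, Finset.card_union_of_disjoint]
  exact Finset.disjoint_filter_filter Icc_disj_aux

lemma Dd_split (σ : ℕ → ℤ) {a b c : ℕ} (h1 : a ≤ b + 1) (h2 : b ≤ c) :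
    Dd σ a c = Dd σ a b + Dd σ (b + 1) c := by
  unfold Dd
  rw [mcnt_split σ h1 h2, pcnt_split σ h1 h2]
  push_cast; ring

lemma mcnt_self (σ : ℕ → ℤ) (a : ℕ) : mcnt σ a a = if σ a = -1 then 1 else 0 := by
  unfold mcnt
  rw [Finset.Icc_self, Finset.filter_singleton]
  split <;> simp

lemma pcnt_self (σ : ℕ → ℤ) (a : ℕ) : pcnt σ a a = if σ a = 1 then 1 else 0 := by
  unfold pcnt
  rw [Finset.Icc_self, Finset.filter_singleton]
  split <;> simp

lemma Dd_self_of_neg (σ : ℕ → ℤ) {a : ℕ} (h : σ a = -1) : Dd σ a a = 1 := by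
  unfold Dd
  rw [mcnt_self, pcnt_self, if_pos h, if_neg (by rw [h]; decide)]
  norm_num

lemma sigma_neg_of_Dd_self (σ : ℕ → ℤ) {a : ℕ}
    (hs : σ a = -1 ∨ σ a = 0 ∨ σ a = 1) (h : 1 ≤ Dd σ a a) : σ a = -1 := by
  rcases hs with hs | hs | hs
  · exact hs
  · exfalso
    unfold Dd at h
    rw [mcnt_self, pcnt_self, hs] at h
    norm_num at h
  · exfalso
    unfold Dd at h
    rw [mcnt_self, pcnt_self, hs] at h
    norm_num at h

lemma Dd_zero_of_zero (σ : ℕ → ℤ) {a b : ℕ} (h : ∀ k, a ≤ k → k ≤ b → σ k = 0) :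
    Dd σ a b = 0 := by
  unfold Dd mcnt pcnt
  rw [Finset.filter_eq_empty_iff.2, Finset.filter_eq_empty_iff.2]
  · simp
  · intro k hk
    simp only [Finset.mem_Icc] at hk
    rw [h k hk.1 hk.2]; decide
  · intro k hk
    simp only [Finset.mem_Icc] at hk
    rw [h k hk.1 hk.2]; decide

/-- Key extraction lemma: if the `−` at position `i` is uncancelled and some interval
`[a..i]` has `#− ≥ #+ + 2`, then there is an uncancelled `−` strictly before `i`. -/
lemma key_lemma (σ : ℕ → ℤ) (hs : ∀ k, σ k = -1 ∨ σ k = 0 ∨ σ k = 1)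
    (a i : ℕ) (hai : a ≤ i) (hii : σ i = -1)
    (hsuf : ∀ k, i ≤ k → 1 ≤ Dd σ i k) (h2 : 2 ≤ Dd σ a i) :
    ∃ j', a ≤ j' ∧ j' < i ∧ σ j' = -1 ∧ ∀ k, j' ≤ k → 1 ≤ Dd σ j' k := by
  have hlt : a < i := by
    rcases lt_or_eq_of_le hai with h | h
    · exact h
    · exfalso; rw [h, Dd_self_of_neg σ hii] at h2; omega
  obtain ⟨i0, rfl⟩ : ∃ i0, i = i0 + 1 := ⟨i - 1, by omega⟩
  have hai0 : a ≤ i0 := by omega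
  have hLi0 : 1 ≤ Dd σ a i0 := by
    have hsp : Dd σ a (i0 + 1) = Dd σ a i0 + Dd σ (i0 + 1) (i0 + 1) :=
      Dd_split σ (by omega) (by omega)
    rw [Dd_self_of_neg σ hii] at hsp
    omega
  set F : Finset ℤ := insert 0 ((Finset.Icc a i0).image (Dd σ a)) with hF
  have hFne : F.Nonempty := ⟨0, Finset.mem_insert_self _ _⟩
  set mval : ℤ := F.min' hFne with hmval
  have hm0 : mval ≤ 0 := Finset.min'_le F 0 (Finset.mem_insert_self _ _)
  have hml : ∀ t, a ≤ t → t ≤ i0 → mval ≤ Dd σ a t := by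
    intro t h1 h2
    exact Finset.min'_le F _ (Finset.mem_insert_of_mem
      (Finset.mem_image_of_mem _ (Finset.mem_Icc.2 ⟨h1, h2⟩)))
  set S : Finset ℕ := (Finset.Icc a i0).filter (fun t => Dd σ a t = mval) with hS
  by_cases hSne : S.Nonempty
  · -- last visit to minimal level
    set k0 : ℕ := S.max' hSne with hk0
    have hk0mem : k0 ∈ S := S.max'_mem hSne
    rw [hS, Finset.mem_filter, Finset.mem_Icc] at hk0mem
    obtain ⟨⟨hak0, hk0i0⟩, hLk0⟩ := hk0mem
    have hk0max : ∀ t, a ≤ t → t ≤ i0 → Dd σ a t = mval → t ≤ k0 := by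
      intro t h1 h2 h3
      exact Finset.le_max' S t (by
        rw [hS, Finset.mem_filter, Finset.mem_Icc]; exact ⟨⟨h1, h2⟩, h3⟩)
    have hk0lt : k0 < i0 := by
      rcases lt_or_eq_of_le hk0i0 with h | h
      · exact h
      · exfalso; rw [h] at hLk0; omega
    have hgt : ∀ t, k0 + 1 ≤ t → t ≤ i0 → mval + 1 ≤ Dd σ a t := by
      intro t h1 h2
      have h3 := hml t (by omega) h2
      rcases lt_or_eq_of_le h3 with h | h
      · omega
      · exact absurd (hk0max t (by omega) h2 h.symm) (by omega)
    have hbody : ∀ t, k0 + 1 ≤ t → t ≤ i0 → 1 ≤ Dd σ (k0 + 1) t := by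
      intro t h1 h2
      have hsp : Dd σ a t = Dd σ a k0 + Dd σ (k0 + 1) t :=
        Dd_split σ (by omega) (by omega)
      have := hgt t h1 h2
      omega
    refine ⟨k0 + 1, by omega, by omega, ?_, ?_⟩
    · exact sigma_neg_of_Dd_self σ (hs _) (hbody (k0 + 1) (le_refl _) (by omega))
    · intro k hk
      by_cases hki : k ≤ i0
      · exact hbody k hk hki
      · have h1' : 1 ≤ Dd σ (k0 + 1) i0 := hbody i0 (by omega) (le_refl _)
        have h2' : 1 ≤ Dd σ (i0 + 1) k := hsuf k (by omega)
        have hsp : Dd σ (k0 + 1) k = Dd σ (k0 + 1) i0 + Dd σ (i0 + 1) k :=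
          Dd_split σ (by omega) (by omega)
        omega
  · -- no visit to minimal level: mval = 0 and all levels ≥ 1
    have hmv0 : mval = 0 := by
      have hmem : mval ∈ F := F.min'_mem hFne
      rw [hF, Finset.mem_insert] at hmem
      rcases hmem with h | h
      · exact h
      · exfalso
        rw [Finset.mem_image] at h
        obtain ⟨t, ht, htv⟩ := h
        exact hSne ⟨t, by rw [hS, Finset.mem_filter]; exact ⟨ht, htv⟩⟩
    have hpos : ∀ t, a ≤ t → t ≤ i0 → 1 ≤ Dd σ a t := by
      intro t h1 h2
      have h3 := hml t h1 h2
      have h4 : Dd σ a t ≠ mval := by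
        intro h
        exact hSne ⟨t, by rw [hS, Finset.mem_filter, Finset.mem_Icc]; exact ⟨⟨h1, h2⟩, h⟩⟩
      omega
    refine ⟨a, le_refl _, by omega, ?_, ?_⟩
    · exact sigma_neg_of_Dd_self σ (hs _) (hpos a (le_refl _) hai0)
    · intro k hk
      by_cases hki : k ≤ i0
      · exact hpos k hk hki
      · have h2' : 1 ≤ Dd σ (i0 + 1) k := hsuf k (by omega)
        have hsp : Dd σ a k = Dd σ a i0 + Dd σ (i0 + 1) k :=
          Dd_split σ (by omega) (by omega)
        omega

/-- The ℕ-indexed signature. -/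
def sigN (pb : Fin (n + 1) → ZMod 2) (p : ℕ) (r : ZMod p) (l : Fin (n + 1) → ℤ) : ℕ → ℤ :=
  fun k => if h : k < n + 1 then sig pb p r l ⟨k, h⟩ else 0

lemma sigN_lt (pb : Fin (n + 1) → ZMod 2) (p : ℕ) (r : ZMod p) (l : Fin (n + 1) → ℤ)
    {k : ℕ} (h : k < n + 1) : sigN pb p r l k = sig pb p r l ⟨k, h⟩ := dif_pos h

lemma sigN_ge (pb : Fin (n + 1) → ZMod 2) (p : ℕ) (r : ZMod p) (l : Fin (n + 1) → ℤ)
    {k : ℕ} (h : ¬ k < n + 1) : sigN pb p r l k = 0 := dif_neg h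

lemma sig_vals (pb : Fin (n + 1) → ZMod 2) (p : ℕ) (r : ZMod p) (l : Fin (n + 1) → ℤ)
    (k : Fin (n + 1)) : sig pb p r l k = -1 ∨ sig pb p r l k = 0 ∨ sig pb p r l k = 1 := by
  unfold sig
  split_ifs <;> simp

lemma sigN_vals (pb : Fin (n + 1) → ZMod 2) (p : ℕ) (r : ZMod p) (l : Fin (n + 1) → ℤ)
    (k : ℕ) : sigN pb p r l k = -1 ∨ sigN pb p r l k = 0 ∨ sigN pb p r l k = 1 := by
  unfold sigN
  split
  · exact sig_vals pb p r l _
  · right; left; rfl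

lemma nM_eq_mcnt (pb : Fin (n + 1) → ZMod 2) (p : ℕ) (r : ZMod p) (l : Fin (n + 1) → ℤ)
    (i j : Fin (n + 1)) : nM pb p r l i j = mcnt (sigN pb p r l) i.val j.val := by
  unfold nM mcnt
  have h1 : {k : Fin (n + 1) | k ∈ Finset.Icc i j ∧ sig pb p r l k = -1}
      = ↑((Finset.Icc i j).filter (fun k => sig pb p r l k = -1)) := by
    ext k; simp [Finset.mem_filter]
  rw [h1, Set.ncard_coe_finset]
  rw [← Fin.map_valEmbedding_Icc, Finset.filter_map, Finset.card_map]
  congr 1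
  apply Finset.filter_congr
  intro k _
  simp only [Function.comp, Fin.valEmbedding_apply]
  rw [sigN_lt pb p r l k.isLt]

lemma nP_eq_pcnt (pb : Fin (n + 1) → ZMod 2) (p : ℕ) (r : ZMod p) (l : Fin (n + 1) → ℤ)
    (i j : Fin (n + 1)) : nP pb p r l i j = pcnt (sigN pb p r l) i.val j.val := by
  unfold nP pcnt
  have h1 : {k : Fin (n + 1) | k ∈ Finset.Icc i j ∧ sig pb p r l k = 1}
      = ↑((Finset.Icc i j).filter (fun k => sig pb p r l k = 1)) := by
    ext k; simp [Finset.mem_filter]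
  rw [h1, Set.ncard_coe_finset]
  rw [← Fin.map_valEmbedding_Icc, Finset.filter_map, Finset.card_map]
  congr 1
  apply Finset.filter_congr
  intro k _
  simp only [Function.comp, Fin.valEmbedding_apply]
  rw [sigN_lt pb p r l k.isLt]

lemma rminus_iff_N (pb : Fin (n + 1) → ZMod 2) (p : ℕ) (r : ZMod p) (l : Fin (n + 1) → ℤ)
    (i : Fin (n + 1)) :
    RMinus pb p r l i ↔ (sigN pb p r l i.val = -1 ∧
      ∀ k, i.val ≤ k → 1 ≤ Dd (sigN pb p r l) i.val k) := by
  constructor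
  · rintro ⟨h1, h2⟩
    constructor
    · rw [sigN_lt pb p r l i.isLt]; rwa [Fin.eta]
    · have hle : ∀ k (hk : k < n + 1), i.val ≤ k → 1 ≤ Dd (sigN pb p r l) i.val k := by
        intro k hk hik
        have := h2 ⟨k, hk⟩ (by rw [Fin.le_def]; exact hik)
        rw [nM_eq_mcnt, nP_eq_pcnt] at this
        have hkv : ((⟨k, hk⟩ : Fin (n + 1)) : ℕ) = k := rfl
        rw [hkv] at this
        unfold Dd; omega
      intro k hik
      by_cases hk : k < n + 1
      · exact hle k hk hik
      · have hin : i.val ≤ n := by omega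
        have h3 : 1 ≤ Dd (sigN pb p r l) i.val n := hle n (by omega) hin
        have h4 : Dd (sigN pb p r l) (n + 1) k = 0 :=
          Dd_zero_of_zero _ (fun t ht _ => sigN_ge pb p r l (by omega))
        have h5 : Dd (sigN pb p r l) i.val k
            = Dd (sigN pb p r l) i.val n + Dd (sigN pb p r l) (n + 1) k :=
          Dd_split _ (by omega) (by omega)
        omega
  · rintro ⟨h1, h2⟩
    constructor
    · rw [sigN_lt pb p r l i.isLt, Fin.eta] at h1; exact h1
    · intro j hij
      have := h2 j.val (Fin.le_def.1 hij)
      rw [nM_eq_mcnt, nP_eq_pcnt]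
      unfold Dd at this; omega

/-- The `r`-signature of `λ − ε_i` agrees with that of `λ` away from `i`. -/
lemma sig_sub_eps_ne (pb : Fin (n + 1) → ZMod 2) (p : ℕ) (r : ZMod p) (lam : Fin (n + 1) → ℤ)
    {i k : Fin (n + 1)} (hk : k ≠ i) :
    sig pb p r (lam - eps i) k = sig pb p r lam k := by
  have e1 : res pb (lam - eps i + eps k) k = res pb (lam + eps k) k := by
    unfold res
    simp [eps, hk]
  have e2 : res pb (lam - eps i) k = res pb lam k := by
    unfold res
    simp [eps, hk]
  unfold sig
  rw [e1, e2]

lemma sig_sub_eps_self (pb : Fin (n + 1) → ZMod 2) (p : ℕ) (r : ZMod p) (lam : Fin (n + 1) → ℤ)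
    {i : Fin (n + 1)} (hi : sig pb p r lam i = -1) :
    sig pb p r (lam - eps i) i = 1 := by
  have hB : ((res pb lam i : ℤ) : ZMod p) = r := by
    unfold sig at hi
    by_cases h1 : ((res pb (lam + eps i) i : ℤ) : ZMod p) = r
    · rw [if_pos h1] at hi; norm_num at hi
    · rw [if_neg h1] at hi
      by_cases h2 : ((res pb lam i : ℤ) : ZMod p) = r
      · exact h2
      · rw [if_neg h2] at hi; norm_num at hi
  have heq : lam - eps i + eps i = lam := sub_add_cancel lam (eps i)
  unfold sig
  rw [heq, if_pos hB]

/-- ℕ-level flip lemma: `Dd` drops by `2` on intervals `[a..i₀]` for `a ≤ i₀`,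
when `σ'` agrees with `σ` off `i₀` and flips from `−` to `+` at `i₀`. -/
lemma Dd_flip (σ σ' : ℕ → ℤ) (i0 : ℕ) (hσi : σ i0 = -1) (hσ'i : σ' i0 = 1)
    (hag : ∀ k, k ≠ i0 → σ' k = σ k) {a : ℕ} (ha : a ≤ i0) :
    Dd σ' a i0 = Dd σ a i0 - 2 := by
  have hmem : i0 ∈ (Finset.Icc a i0).filter (fun k => σ k = -1) := by
    rw [Finset.mem_filter, Finset.mem_Icc]
    exact ⟨⟨ha, le_refl _⟩, hσi⟩
  have hm : (Finset.Icc a i0).filter (fun k => σ' k = -1)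
      = ((Finset.Icc a i0).filter (fun k => σ k = -1)).erase i0 := by
    ext k
    rw [Finset.mem_erase, Finset.mem_filter, Finset.mem_filter]
    constructor
    · rintro ⟨hk1, hk2⟩
      by_cases h : k = i0
      · exfalso; rw [h, hσ'i] at hk2; norm_num at hk2
      · exact ⟨h, hk1, by rw [← hag k h]; exact hk2⟩
    · rintro ⟨h, hk1, hk2⟩
      exact ⟨hk1, by rw [hag k h]; exact hk2⟩
  have hnotmem : i0 ∉ (Finset.Icc a i0).filter (fun k => σ k = 1) := by
    rw [Finset.mem_filter]
    rintro ⟨-, h⟩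
    rw [hσi] at h; norm_num at h
  have hp : (Finset.Icc a i0).filter (fun k => σ' k = 1)
      = insert i0 ((Finset.Icc a i0).filter (fun k => σ k = 1)) := by
    ext k
    rw [Finset.mem_insert, Finset.mem_filter, Finset.mem_filter]
    constructor
    · rintro ⟨hk1, hk2⟩
      by_cases h : k = i0
      · exact Or.inl h
      · exact Or.inr ⟨hk1, by rw [← hag k h]; exact hk2⟩
    · rintro (h | ⟨hk1, hk2⟩)
      · subst h; exact ⟨Finset.mem_Icc.2 ⟨ha, le_refl _⟩, hσ'i⟩
      · exact ⟨hk1, by rw [hag, hk2]; intro h; rw [h, hσi] at hk2; norm_num at hk2⟩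
  have hmcard : mcnt σ' a i0 = mcnt σ a i0 - 1 := by
    unfold mcnt; rw [hm, Finset.card_erase_of_mem hmem]
  have hmpos : 1 ≤ mcnt σ a i0 := by
    unfold mcnt; exact Finset.card_pos.2 ⟨i0, hmem⟩
  have hpcard : pcnt σ' a i0 = pcnt σ a i0 + 1 := by
    unfold pcnt; rw [hp, Finset.card_insert_of_notMem hnotmem]
  unfold Dd
  rw [hmcard, hpcard]
  omega

/-- `i` is `r`-good for `λ` iff `i` is `r`-normal for `λ` and `i` is
`r`-conormal for `λ − ε_i`. -/
theorem statement9 (p : ℕ) (hp : p = 0 ∨ p.Prime) (pb : Fin (n + 1) → ZMod 2)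
    (lam : Fin (n + 1) → ℤ) (i : Fin (n + 1)) (r : ZMod p) :
    RGood pb p r lam i ↔ RMinus pb p r lam i ∧ RPlus pb p r (lam - eps i) i := by
  set σ : ℕ → ℤ := sigN pb p r lam with hσdef
  set σ' : ℕ → ℤ := sigN pb p r (lam - eps i) with hσ'def
  -- common facts, under the assumption that `sig lam i = -1`
  have hflip : sig pb p r lam i = -1 →
      (σ i.val = -1 ∧ σ' i.val = 1 ∧ ∀ k, k ≠ i.val → σ' k = σ k) := by
    intro hsig
    refine ⟨?_, ?_, ?_⟩
    · rw [hσdef, sigN_lt pb p r lam i.isLt, Fin.eta]; exact hsig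
    · rw [hσ'def, sigN_lt pb p r _ i.isLt, Fin.eta]
      exact sig_sub_eps_self pb p r lam hsig
    · intro k hk
      by_cases h : k < n + 1
      · rw [hσ'def, hσdef, sigN_lt pb p r _ h, sigN_lt pb p r lam h]
        exact sig_sub_eps_ne pb p r lam (by simp [Fin.ext_iff, hk])
      · rw [hσ'def, hσdef, sigN_ge pb p r _ h, sigN_ge pb p r lam h]
  -- from `RMinus lam j` for `j < i`: `Dd σ j.val i.val ≥ 2`
  have htwo : σ i.val = -1 → ∀ j : Fin (n + 1), j < i → RMinus pb p r lam j →
      2 ≤ Dd σ j.val i.val := by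
    intro hσi j hj hRM
    obtain ⟨hσj, hDj⟩ := (rminus_iff_N pb p r lam j).1 hRM
    have hji : j.val < i.val := Fin.lt_def.1 hj
    obtain ⟨i0, hi0⟩ : ∃ i0, i.val = i0 + 1 := ⟨i.val - 1, by omega⟩
    have hsplit : Dd σ j.val i.val = Dd σ j.val i0 + Dd σ (i0 + 1) i.val := by
      rw [hi0]
      exact Dd_split σ (by omega) (by omega)
    have h1 : 1 ≤ Dd σ j.val i0 := hDj i0 (by omega)
    have h2 : Dd σ (i0 + 1) i.val = 1 := by
      rw [hi0] at hσi ⊢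
      exact Dd_self_of_neg σ hσi
    omega
  constructor
  · rintro ⟨hmin, hgood⟩
    obtain ⟨hσi, hσ'i, hag⟩ := hflip hmin.1
    obtain ⟨-, hsufN⟩ := (rminus_iff_N pb p r lam i).1 hmin
    refine ⟨hmin, ?_, ?_⟩
    · rw [sig_sub_eps_self pb p r lam hmin.1]
    · intro j hji
      rw [nM_eq_mcnt, nP_eq_pcnt, ← hσ'def]
      have hjiv : j.val ≤ i.val := Fin.le_def.1 hji
      have hDd' : Dd σ' j.val i.val = Dd σ j.val i.val - 2 :=
        Dd_flip σ σ' i.val hσi hσ'i hag hjiv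
      have hle1 : Dd σ j.val i.val ≤ 1 := by
        by_contra h
        push_neg at h
        obtain ⟨j', hj'1, hj'2, hj'3, hj'4⟩ := key_lemma σ (sigN_vals pb p r lam)
          j.val i.val hjiv hσi hsufN (by omega)
        have hj'lt : j' < n + 1 := by omega
        have : RMinus pb p r lam ⟨j', hj'lt⟩ := by
          rw [rminus_iff_N]
          exact ⟨hj'3, hj'4⟩
        exact hgood ⟨j', hj'lt⟩ (Fin.lt_def.2 hj'2) this
      have : Dd σ' j.val i.val ≤ -1 := by omega
      unfold Dd at this; omega
  · rintro ⟨hmin, hplus⟩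
    obtain ⟨hσi, hσ'i, hag⟩ := hflip hmin.1
    refine ⟨hmin, ?_⟩
    intro j hj hRMj
    have h2 : 2 ≤ Dd σ j.val i.val := htwo hσi j hj hRMj
    have hDd' : Dd σ' j.val i.val = Dd σ j.val i.val - 2 :=
      Dd_flip σ σ' i.val hσi hσ'i hag (le_of_lt (Fin.lt_def.1 hj))
    have := hplus.2 j (le_of_lt hj)
    rw [nM_eq_mcnt, nP_eq_pcnt, ← hσ'def] at this
    unfold Dd at hDd' h2
    omega

end Kujawa
end
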